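/- If π ∈ S_{2n+1} is a down-up permutation (π(1) > π(2) < π(3) > π(4) < ⋯), then every inversion of π is admissible, i.e. adi π = inv π. Moreover, for every π ∈ T_{2n+1,n}(213): (1) adi π + adi π^r = 2n² + n; (2) adi π = 2 · (3-12)π; (3) adi π^r = (31-2)π, where π^r is the reverse of π, defined by π^r(i) = π(2n+2−i). -/

import Mathlib

open scoped Classical
open Finset

/-- Value of `π` at the 1-indexed position `i`, as a number in `{1,…,n}`;
positions outside `[1,n]` get the boundary value `b`. -/
def pvalB {n : ℕ} (b : ℕ) (π : Equiv.Perm (Fin n)) (i : ℕ) : ℕ :=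
  if h : 1 ≤ i ∧ i ≤ n then (π ⟨i - 1, by omega⟩).val + 1 else b

/-- Value of `π` at the 1-indexed position `i` (boundary value 0). -/
def pval {n : ℕ} (π : Equiv.Perm (Fin n)) : ℕ → ℕ := pvalB 0 π

/-- number of descents -/
def desStat {n : ℕ} (π : Equiv.Perm (Fin n)) : ℕ :=
  ((Finset.Icc 1 (n - 1)).filter fun i => pval π (i + 1) < pval π i).card

/-- number of excedances -/
def excStat {n : ℕ} (π : Equiv.Perm (Fin n)) : ℕ :=
  ((Finset.Icc 1 n).filter fun i => i < pval π i).card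

/-- number of weak excedances -/
def wexStat {n : ℕ} (π : Equiv.Perm (Fin n)) : ℕ :=
  ((Finset.Icc 1 n).filter fun i => i ≤ pval π i).card

/-- number of inversions -/
def invStat {n : ℕ} (π : Equiv.Perm (Fin n)) : ℕ :=
  (((Finset.Icc 1 n) ×ˢ (Finset.Icc 1 n)).filter fun p =>
    p.1 < p.2 ∧ pval π p.2 < pval π p.1).card

/-- number of fixed points -/
def fixStat {n : ℕ} (π : Equiv.Perm (Fin n)) : ℕ :=
  ((Finset.Icc 1 n).filter fun i => pval π i = i).card

/-- number of occurrences of the vincular pattern 31-2: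
pairs (i,j) with i+1 < j ≤ n and π(i+1) < π(j) < π(i) -/
def v31_2 {n : ℕ} (π : Equiv.Perm (Fin n)) : ℕ :=
  (((Finset.Icc 1 n) ×ˢ (Finset.Icc 1 n)).filter fun p =>
    p.1 + 1 < p.2 ∧ pval π (p.1 + 1) < pval π p.2 ∧ pval π p.2 < pval π p.1).card

/-- number of occurrences of the vincular pattern 13-2:
pairs (i,j) with i+1 < j ≤ n and π(i) < π(j) < π(i+1) -/
def v13_2 {n : ℕ} (π : Equiv.Perm (Fin n)) : ℕ :=
  (((Finset.Icc 1 n) ×ˢ (Finset.Icc 1 n)).filter fun p =>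
    p.1 + 1 < p.2 ∧ pval π p.1 < pval π p.2 ∧ pval π p.2 < pval π (p.1 + 1)).card

/-- number of occurrences of the vincular pattern 2-31:
pairs (i,j) with 1 ≤ j < i ≤ n-1 and π(i+1) < π(j) < π(i); here `p = (i, j)` -/
def v2_31 {n : ℕ} (π : Equiv.Perm (Fin n)) : ℕ :=
  (((Finset.Icc 1 (n - 1)) ×ˢ (Finset.Icc 1 (n - 1))).filter fun p =>
    p.2 < p.1 ∧ pval π (p.1 + 1) < pval π p.2 ∧ pval π p.2 < pval π p.1).card

/-- number of occurrences of the vincular pattern 2-13: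
pairs (i,j) with 1 ≤ j < i ≤ n-1 and π(i) < π(j) < π(i+1); here `p = (i, j)` -/
def v2_13 {n : ℕ} (π : Equiv.Perm (Fin n)) : ℕ :=
  (((Finset.Icc 1 (n - 1)) ×ˢ (Finset.Icc 1 (n - 1))).filter fun p =>
    p.2 < p.1 ∧ pval π p.1 < pval π p.2 ∧ pval π p.2 < pval π (p.1 + 1)).card

/-- number of occurrences of the vincular pattern 3-12:
pairs (i,j) with 1 ≤ i < j ≤ n-1 and π(j) < π(j+1) < π(i) -/
def v3_12 {n : ℕ} (π : Equiv.Perm (Fin n)) : ℕ :=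
  (((Finset.Icc 1 (n - 1)) ×ˢ (Finset.Icc 1 (n - 1))).filter fun p =>
    p.1 < p.2 ∧ pval π p.2 < pval π (p.2 + 1) ∧ pval π (p.2 + 1) < pval π p.1).card

/-- number of admissible inversions -/
noncomputable def adiStat {n : ℕ} (π : Equiv.Perm (Fin n)) : ℕ :=
  (((Finset.Icc 1 n) ×ˢ (Finset.Icc 1 n)).filter fun p =>
    p.1 < p.2 ∧ pval π p.2 < pval π p.1 ∧
      ((p.2 < n ∧ pval π p.2 < pval π (p.2 + 1)) ∨
        ∃ l, p.1 < l ∧ l < p.2 ∧ pval π l < pval π p.2)).card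

/-- number of star admissible inversions -/
noncomputable def adiStarStat {n : ℕ} (π : Equiv.Perm (Fin n)) : ℕ :=
  (((Finset.Icc 1 n) ×ˢ (Finset.Icc 1 n)).filter fun p =>
    p.1 < p.2 ∧ pval π p.2 < pval π p.1 ∧
      ((1 < p.1 ∧ pval π (p.1 - 1) < pval π p.1) ∨
        ∃ l, p.1 < l ∧ l < p.2 ∧ pval π p.1 < pval π l)).card

/-- nesting number -/
def nestStat {n : ℕ} (π : Equiv.Perm (Fin n)) : ℕ :=
  (((Finset.Icc 1 n) ×ˢ (Finset.Icc 1 n)).filter fun p =>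
    p.1 < p.2 ∧ p.2 ≤ pval π p.2 ∧ pval π p.2 < pval π p.1).card +
  (((Finset.Icc 1 n) ×ˢ (Finset.Icc 1 n)).filter fun p =>
    p.1 < p.2 ∧ pval π p.2 < pval π p.1 ∧ pval π p.1 < p.1).card

/-- `π` avoids the pattern given (in one-line notation) by the sequence `p` -/
def avoids {n k : ℕ} (π : Equiv.Perm (Fin n)) (p : Fin k → ℕ) : Prop :=
  ¬ ∃ f : Fin k ↪o Fin n, ∀ a b : Fin k, p a < p b ↔ π (f a) < π (f b)

/-- `π` has no double descent, with boundary values `b` at positions 0 and n+1 -/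
def noDD {n : ℕ} (b : ℕ) (π : Equiv.Perm (Fin n)) : Prop :=
  ∀ i, 1 ≤ i → i ≤ n →
    ¬ (pvalB b π i < pvalB b π (i - 1) ∧ pvalB b π (i + 1) < pvalB b π i)

/-- alternating (up-down): π(1) < π(2) > π(3) < π(4) > ⋯ -/
def isAlt {n : ℕ} (π : Equiv.Perm (Fin n)) : Prop :=
  ∀ i, 1 ≤ i → i + 1 ≤ n →
    (Odd i → pval π i < pval π (i + 1)) ∧ (Even i → pval π (i + 1) < pval π i)

/-- down-up: π(1) > π(2) < π(3) > π(4) < ⋯ -/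
def isDownUp {n : ℕ} (π : Equiv.Perm (Fin n)) : Prop :=
  ∀ i, 1 ≤ i → i + 1 ≤ n →
    (Odd i → pval π (i + 1) < pval π i) ∧ (Even i → pval π i < pval π (i + 1))

/-- `i` is a foremaximum of `π` -/
def isForemax {n : ℕ} (π : Equiv.Perm (Fin n)) (i : ℕ) : Prop :=
  1 ≤ i ∧ i ≤ n ∧ (∀ j, 1 ≤ j → j ≤ i → pval π j ≤ pval π i) ∧
    (i = n ∨ pval π i < pval π (i + 1))

/-- coderangement: no foremaximum -/
def isCoderangement {n : ℕ} (π : Equiv.Perm (Fin n)) : Prop :=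
  ∀ i, ¬ isForemax π i

/-- derangement: no fixed point -/
def isDerangement {n : ℕ} (π : Equiv.Perm (Fin n)) : Prop := ∀ i, π i ≠ i

/-- the order-reversing permutation of positions -/
def revPermN (n : ℕ) : Equiv.Perm (Fin n) := ⟨Fin.rev, Fin.rev, Fin.rev_rev, Fin.rev_rev⟩

/-- the reverse of `π`: πʳ(i) = π(n+1-i) -/
def reverseP {n : ℕ} (π : Equiv.Perm (Fin n)) : Equiv.Perm (Fin n) := (revPermN n).trans π

section helpers

variable {N : ℕ}

lemma pval_def (π : Equiv.Perm (Fin N)) {i : ℕ} (h1 : 1 ≤ i) (h2 : i ≤ N) :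
    pval π i = (π ⟨i - 1, by omega⟩).val + 1 := by
  have h : (1 ≤ i ∧ i ≤ N) := ⟨h1, h2⟩
  simp only [pval, pvalB, dif_pos h]

lemma pval_le (π : Equiv.Perm (Fin N)) (i : ℕ) : pval π i ≤ N := by
  unfold pval pvalB
  split
  · next h => exact (π ⟨i-1, by omega⟩).isLt
  · omega

lemma pval_pos (π : Equiv.Perm (Fin N)) {i : ℕ} (h1 : 1 ≤ i) (h2 : i ≤ N) :
    1 ≤ pval π i := by rw [pval_def π h1 h2]; omega

lemma pval_inj (π : Equiv.Perm (Fin N)) {i j : ℕ} (h1 : 1 ≤ i) (h2 : i ≤ N)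
    (h3 : 1 ≤ j) (h4 : j ≤ N) (h : pval π i = pval π j) : i = j := by
  rw [pval_def π h1 h2, pval_def π h3 h4] at h
  have hv : π ⟨i-1, by omega⟩ = π ⟨j-1, by omega⟩ := Fin.ext (by omega)
  have := congrArg Fin.val (π.injective hv)
  simp only at this
  omega

end helpers
section helpers2
variable {N : ℕ}
lemma strictMono3 {α : Type*} [Preorder α] {x y z : α} (h1 : x < y) (h2 : y < z) :
    StrictMono (![x, y, z] : Fin 3 → α) := by
  intro i j hij
  fin_cases i <;> fin_cases j <;>
    first
      | exact absurd hij (by decide)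
      | simpa using h1
      | simpa using h2
      | simpa using h1.trans h2
end helpers2
section helpers2
variable {N : ℕ}
lemma no213 (π : Equiv.Perm (Fin N)) (hav : avoids π ![2,1,3])
    {a b c : ℕ} (ha : 1 ≤ a) (hab : a < b) (hbc : b < c) (hc : c ≤ N)
    (h1 : pval π b < pval π a) (h2 : pval π a < pval π c) : False := by
  have hA : a - 1 < N := by omega
  have hB : b - 1 < N := by omega
  have hC : c - 1 < N := by omega
  have ha2 : a ≤ N := by omega
  have hb1 : 1 ≤ b := by omega
  have hb2 : b ≤ N := by omega
  have hc1 : 1 ≤ c := by omega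
  have hab1 : a - 1 < b - 1 := by omega
  have hbc1 : b - 1 < c - 1 := by omega
  rw [pval_def (i := b) π hb1 hb2, pval_def (i := a) π ha ha2] at h1
  rw [pval_def (i := a) π ha ha2, pval_def (i := c) π hc1 hc] at h2
  have v1 : π ⟨b-1, hB⟩ < π ⟨a-1, hA⟩ := Fin.lt_def.mpr (Nat.lt_of_add_lt_add_right h1)
  have v2 : π ⟨a-1, hA⟩ < π ⟨c-1, hC⟩ := Fin.lt_def.mpr (Nat.lt_of_add_lt_add_right h2)
  have v3 : π ⟨b-1, hB⟩ < π ⟨c-1, hC⟩ := v1.trans v2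
  have hab' : (⟨a-1, hA⟩ : Fin N) < ⟨b-1, hB⟩ := Fin.lt_def.mpr hab1
  have hbc' : (⟨b-1, hB⟩ : Fin N) < ⟨c-1, hC⟩ := Fin.lt_def.mpr hbc1
  apply hav
  refine ⟨OrderEmbedding.ofStrictMono _ (strictMono3 hab' hbc'), ?_⟩
  intro x y
  fin_cases x <;> fin_cases y <;>
    simp only [OrderEmbedding.coe_ofStrictMono, Fin.isValue,
      Matrix.cons_val_zero, Matrix.cons_val_one, Matrix.head_cons,
      Matrix.cons_val_two, Matrix.tail_cons, Matrix.head_fin_const] <;>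
    first
      | exact iff_of_false (by norm_num) (lt_irrefl _)
      | exact iff_of_true (by norm_num) v1
      | exact iff_of_true (by norm_num) v2
      | exact iff_of_true (by norm_num) v3
      | exact iff_of_false (by norm_num) (asymm v1)
      | exact iff_of_false (by norm_num) (asymm v2)
      | exact iff_of_false (by norm_num) (asymm v3)
end helpers2
section helpers3
variable {N : ℕ}
lemma pval_ne (π : Equiv.Perm (Fin N)) {i j : ℕ} (h1 : 1 ≤ i) (h2 : i ≤ N)
    (h3 : 1 ≤ j) (h4 : j ≤ N) (hne : i ≠ j) : pval π i ≠ pval π j :=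
  fun h => hne (pval_inj π h1 h2 h3 h4 h)

lemma after_descent (π : Equiv.Perm (Fin N)) (hav : avoids π ![2,1,3])
    {p : ℕ} (hp1 : 1 ≤ p) (hp2 : p + 1 ≤ N) (hpd : pval π (p+1) < pval π p) :
    ∀ j, p < j → j ≤ N → pval π j < pval π p := by
  intro j
  induction j using Nat.strong_induction_on with
  | _ j ih =>
    intro hpj hjN
    rcases eq_or_lt_of_le (Nat.succ_le_of_lt hpj) with he | hl
    · rw [← he]; exact hpd
    · have hprev : pval π (j-1) < pval π p := ih (j-1) (by omega) (by omega) (by omega)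
      by_contra hc
      have hne : pval π p ≠ pval π j := pval_ne π hp1 (by omega) (by omega) hjN (by omega)
      have hlt : pval π p < pval π j := by omega
      exact no213 π hav hp1 (by omega : p < j-1) (by omega : j-1 < j) hjN hprev hlt
end helpers3
section downup

lemma downUp_of_noDD (n : ℕ) (π : Equiv.Perm (Fin (2*n+1))) (hnd : noDD 0 π)
    (hdes : desStat π = n) : isDownUp π := by
  rcases Nat.eq_zero_or_pos n with rfl | hn
  · intro i hi1 hi2; omega
  set D : Finset ℕ := (Finset.Icc 1 (2*n)).filter (fun i => pval π (i+1) < pval π i) with hDdef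
  have hD : D.card = n := by
    have e : (2*n+1) - 1 = 2*n := by omega
    rw [desStat, e] at hdes
    exact hdes
  have hmemD : ∀ i, i ∈ D ↔ (1 ≤ i ∧ i ≤ 2*n ∧ pval π (i+1) < pval π i) := by
    intro i
    rw [hDdef, Finset.mem_filter, Finset.mem_Icc]
    tauto
  have noconsec : ∀ i, i ∈ D → i + 1 ∉ D := by
    intro i hi hi1
    rw [hmemD] at hi hi1
    exact hnd (i+1) (by omega) (by omega) ⟨hi.2.2, hi1.2.2⟩
  have hlast : (2*n) ∉ D := by
    intro hmem
    rw [hmemD] at hmem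
    apply hnd (2*n+1) (by omega) (by omega)
    refine ⟨hmem.2.2, ?_⟩
    have e0 : pvalB 0 π (2*n+1+1) = 0 := by
      unfold pvalB
      rw [dif_neg (by omega)]
    rw [e0]
    exact pval_pos π (by omega) (by omega)
  have evens : ∀ j, 1 ≤ j → j ≤ n → (2*j) ∉ D := by
    intro j hj1 hj2 hmem
    set A := D.filter (fun i => i ≤ 2*j - 2) with hA
    set B := D.filter (fun i => 2*j ≤ i) with hB
    have hsub : D ⊆ A ∪ B := by
      intro i hi
      have hi' := (hmemD i).mp hi
      rcases Nat.lt_or_ge i (2*j-1) with h | h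
      · exact Finset.mem_union_left _ (Finset.mem_filter.mpr ⟨hi, by omega⟩)
      · rcases Nat.eq_or_lt_of_le h with he | hgt
        · exfalso
          apply noconsec i hi
          rw [show i + 1 = 2*j by omega]
          exact hmem
        · exact Finset.mem_union_right _ (Finset.mem_filter.mpr ⟨hi, by omega⟩)
    have hAcard : A.card ≤ (Finset.Icc 1 (j-1)).card := by
      apply Finset.card_le_card_of_injOn (f := fun i => (i+1)/2)
      · intro x hx
        rw [hA, Finset.mem_coe, Finset.mem_filter, hmemD] at hx
        simp only [Finset.mem_coe, Finset.mem_Icc]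
        omega
      · intro x hx y hy hxy
        simp only [Finset.coe_filter, Set.mem_setOf_eq, hA] at hx hy
        simp only at hxy
        rcases Nat.lt_trichotomy x y with h | h | h
        · exfalso
          have hxD := hx.1
          rw [hmemD] at hx hy
          have : y = x + 1 := by omega
          apply noconsec x hxD
          rw [← this]
          rw [hmemD]
          exact hy.1
        · exact h
        · exfalso
          have hyD := hy.1
          rw [hmemD] at hx hy
          have : x = y + 1 := by omega
          apply noconsec y hyD
          rw [← this, hmemD]
          exact hx.1
    have hBcard : B.card ≤ (Finset.Icc 1 (n-j)).card := by
      apply Finset.card_le_card_of_injOn (f := fun i => (i - 2*j)/2 + 1)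
      · intro x hx
        rw [hB, Finset.mem_coe, Finset.mem_filter] at hx
        have hxne : x ≠ 2*n := fun he => hlast (he ▸ hx.1)
        have := (hmemD x).mp hx.1
        simp only [Finset.mem_coe, Finset.mem_Icc]
        omega
      · intro x hx y hy hxy
        simp only [Finset.coe_filter, Set.mem_setOf_eq, hB] at hx hy
        simp only at hxy
        have hx2 := hx.2
        have hy2 := hy.2
        rcases Nat.lt_trichotomy x y with h | h | h
        · exfalso
          have hxD := hx.1
          rw [hmemD] at hx hy
          have : y = x + 1 := by omega
          apply noconsec x hxD
          rw [← this, hmemD]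
          exact hy.1
        · exact h
        · exfalso
          have hyD := hy.1
          rw [hmemD] at hx hy
          have : x = y + 1 := by omega
          apply noconsec y hyD
          rw [← this, hmemD]
          exact hx.1
    have h1 := Finset.card_le_card hsub
    have h2 := Finset.card_union_le A B
    rw [Nat.card_Icc] at hAcard hBcard
    omega
  set O : Finset ℕ := (Finset.Icc 1 (2*n)).filter (fun i => i % 2 = 1) with hO
  have hOcard : O.card ≤ (Finset.Icc 1 n).card := by
    apply Finset.card_le_card_of_injOn (f := fun i => (i+1)/2)
    · intro x hx
      rw [hO, Finset.mem_coe, Finset.mem_filter, Finset.mem_Icc] at hx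
      simp only [Finset.mem_coe, Finset.mem_Icc]
      omega
    · intro x hx y hy hxy
      simp only [Finset.coe_filter, Set.mem_setOf_eq, Finset.mem_Icc, hO] at hx hy
      simp only at hxy
      omega
  have hDO : D ⊆ O := by
    intro i hi
    have hi' := (hmemD i).mp hi
    rw [hO, Finset.mem_filter, Finset.mem_Icc]
    refine ⟨⟨hi'.1, hi'.2.1⟩, ?_⟩
    by_contra hodd
    have he2 : 2 * (i / 2) = i := by omega
    apply evens (i/2) (by omega) (by omega)
    rw [he2]
    exact hi
  have hDeq : D = O := by
    apply Finset.eq_of_subset_of_card_le hDO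
    rw [hD]
    rw [Nat.card_Icc] at hOcard
    omega
  intro i hi1 hi2
  constructor
  · intro hodd
    have hiO : i ∈ O := by
      rw [hO, Finset.mem_filter, Finset.mem_Icc]
      exact ⟨⟨hi1, by omega⟩, Nat.odd_iff.mp hodd⟩
    rw [← hDeq, hmemD] at hiO
    exact hiO.2.2
  · intro heven
    have hnotO : i ∉ O := by
      rw [hO, Finset.mem_filter]
      rw [Nat.even_iff] at heven
      omega
    rw [← hDeq] at hnotO
    have hnd' : ¬ (pval π (i+1) < pval π i) := fun hlt =>
      hnotO ((hmemD i).mpr ⟨hi1, by omega, hlt⟩)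
    have hne := pval_ne π hi1 (by omega) (by omega) (by omega : i+1 ≤ 2*n+1) (by omega)
    omega

end downup
section s1

lemma adi_eq_inv (n : ℕ) (π : Equiv.Perm (Fin (2*n+1))) (h : isDownUp π) :
    adiStat π = invStat π := by
  unfold adiStat invStat
  congr 1
  apply Finset.ext
  rintro ⟨i, j⟩
  simp only [Finset.mem_filter, Finset.mem_product, Finset.mem_Icc]
  constructor
  · rintro ⟨hm, hij, hinv, _⟩
    exact ⟨hm, hij, hinv⟩
  · rintro ⟨hm, hij, hinv⟩
    obtain ⟨⟨hi1, hi2⟩, hj1, hj2⟩ := hm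
    refine ⟨⟨⟨hi1, hi2⟩, hj1, hj2⟩, hij, hinv, ?_⟩
    rcases Nat.even_or_odd j with hje | hjo
    · left
      have hjN : j < 2*n+1 := by
        rcases hje with ⟨k, hk⟩
        omega
      exact ⟨hjN, (h j (by omega) (by omega)).2 hje⟩
    · right
      have hj3 : 2 ≤ j := by omega
      have hje' : Even (j-1) := by
        rw [Nat.even_iff]
        rw [Nat.odd_iff] at hjo
        omega
      have hasc := (h (j-1) (by omega) (by omega)).2 hje'
      rw [show j - 1 + 1 = j by omega] at hasc
      have hne : i ≠ j - 1 := by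
        intro he
        rw [he] at hinv
        omega
      exact ⟨j-1, by omega, by omega, hasc⟩

lemma pval_reverse {N : ℕ} (π : Equiv.Perm (Fin N)) {i : ℕ} (h1 : 1 ≤ i) (h2 : i ≤ N) :
    pval (reverseP π) i = pval π (N + 1 - i) := by
  rw [pval_def (i := i) _ h1 h2, pval_def (i := N+1-i) π (by omega) (by omega)]
  have hrev : ((revPermN N) ⟨i-1, by omega⟩ : Fin N) = ⟨N+1-i-1, by omega⟩ := by
    apply Fin.ext
    show (Fin.rev ⟨i-1, by omega⟩ : Fin N).val = N+1-i-1
    rw [Fin.val_rev]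
    simp only
    omega
  show (π ((revPermN N) ⟨i-1, by omega⟩)).val + 1 = _
  rw [hrev]

lemma downUp_reverse (n : ℕ) (π : Equiv.Perm (Fin (2*n+1))) (h : isDownUp π) :
    isDownUp (reverseP π) := by
  intro i hi1 hi2
  rw [pval_reverse π (by omega) (by omega), pval_reverse π (by omega) (by omega)]
  have e1 : 2*n+1+1-(i+1) = 2*n+1-i := by omega
  rw [e1]
  constructor
  · intro hodd
    have heven : Even (2*n+1-i) := by
      rw [Nat.even_iff]
      rw [Nat.odd_iff] at hodd
      omega
    have := (h (2*n+1-i) (by omega) (by omega)).2 heven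
    rw [show 2*n+1-i+1 = 2*n+1+1-i by omega] at this
    exact this
  · intro heven
    have hodd : Odd (2*n+1-i) := by
      rw [Nat.odd_iff]
      rw [Nat.even_iff] at heven
      omega
    have := (h (2*n+1-i) (by omega) (by omega)).1 hodd
    rw [show 2*n+1-i+1 = 2*n+1+1-i by omega] at this
    exact this

end s1
section counting

lemma card_filter_prod_snd (s t : Finset ℕ) (P : ℕ → ℕ → Prop) [∀ i j : ℕ, Decidable (P i j)] :
    (((s ×ˢ t)).filter fun p => P p.1 p.2).card
      = ∑ j ∈ t, (s.filter fun i => P i j).card := by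
  rw [Finset.card_eq_sum_card_fiberwise (f := Prod.snd) (t := t)
    (fun x hx => (Finset.mem_product.mp (Finset.mem_filter.mp hx).1).2)]
  refine Finset.sum_congr rfl fun j hj => ?_
  apply Finset.card_nbij (i := Prod.fst)
  · intro p hp
    simp only [Finset.mem_coe, Finset.mem_filter, Finset.mem_product] at hp
    obtain ⟨⟨⟨hp1, hp2⟩, hP⟩, he⟩ := hp
    rw [Finset.mem_coe, Finset.mem_filter]
    exact ⟨hp1, he ▸ hP⟩
  · intro p hp q hq hpq
    simp only [Finset.mem_coe, Finset.mem_filter] at hp hq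
    exact Prod.ext hpq (hp.2.trans hq.2.symm)
  · intro a ha
    simp only [Finset.coe_filter, Set.mem_setOf_eq] at ha
    refine ⟨(a, j), ?_, rfl⟩
    simp only [Finset.mem_coe, Finset.mem_filter, Finset.mem_product]
    exact ⟨⟨⟨ha.1, hj⟩, ha.2⟩, trivial⟩

lemma card_filter_prod_fst (s t : Finset ℕ) (P : ℕ → ℕ → Prop) [∀ i j : ℕ, Decidable (P i j)] :
    (((s ×ˢ t)).filter fun p => P p.1 p.2).card
      = ∑ i ∈ s, (t.filter fun j => P i j).card := by
  rw [Finset.card_eq_sum_card_fiberwise (f := Prod.fst) (t := s)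
    (fun x hx => (Finset.mem_product.mp (Finset.mem_filter.mp hx).1).1)]
  refine Finset.sum_congr rfl fun i hi => ?_
  apply Finset.card_nbij (i := Prod.snd)
  · intro p hp
    simp only [Finset.mem_coe, Finset.mem_filter, Finset.mem_product] at hp
    obtain ⟨⟨⟨hp1, hp2⟩, hP⟩, he⟩ := hp
    rw [Finset.mem_coe, Finset.mem_filter]
    exact ⟨hp2, he ▸ hP⟩
  · intro p hp q hq hpq
    simp only [Finset.mem_coe, Finset.mem_filter] at hp hq
    exact Prod.ext (hp.2.trans hq.2.symm) hpq
  · intro a ha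
    simp only [Finset.coe_filter, Set.mem_setOf_eq] at ha
    refine ⟨(i, a), ?_, rfl⟩
    simp only [Finset.mem_coe, Finset.mem_filter, Finset.mem_product]
    exact ⟨⟨⟨hi, ha.1⟩, ha.2⟩, trivial⟩

lemma splitA (f : ℕ → ℕ) : ∀ m : ℕ,
    ∑ j ∈ Finset.Icc 1 (2*m+1), f j = f 1 + ∑ k ∈ Finset.Icc 1 m, (f (2*k) + f (2*k+1)) := by
  intro m
  induction m with
  | zero => simp
  | succ m ih =>
    rw [show 2*(m+1)+1 = (2*m+2)+1 by ring, Finset.sum_Icc_succ_top (by omega),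
      show (2*m+2) = (2*m+1)+1 by ring, Finset.sum_Icc_succ_top (by omega), ih,
      Finset.sum_Icc_succ_top (show 1 ≤ m+1 by omega)]
    rw [show 2*(m+1)+1 = 2*m+1+1+1 by ring, show 2*(m+1) = 2*m+1+1 by ring]
    ring

lemma splitB (f : ℕ → ℕ) : ∀ m : ℕ,
    ∑ j ∈ Finset.Icc 1 (2*m), f j = ∑ k ∈ Finset.Icc 1 m, (f (2*k-1) + f (2*k)) := by
  intro m
  induction m with
  | zero => simp
  | succ m ih =>
    rw [show 2*(m+1) = (2*m+1)+1 by ring, Finset.sum_Icc_succ_top (by omega),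
      show (2*m+1) = (2*m)+1 by ring, Finset.sum_Icc_succ_top (by omega), ih,
      Finset.sum_Icc_succ_top (show 1 ≤ m+1 by omega)]
    rw [show 2*(m+1)-1 = 2*m+1 by omega, show 2*(m+1) = 2*m+1+1 by ring]
    ring

lemma shiftSum (f : ℕ → ℕ) : ∀ m : ℕ,
    f 1 + ∑ k ∈ Finset.Icc 1 m, f (k+1) = ∑ k ∈ Finset.Icc 1 (m+1), f k := by
  intro m
  induction m with
  | zero => simp
  | succ m ih =>
    rw [Finset.sum_Icc_succ_top (show 1 ≤ m+1 by omega),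
      Finset.sum_Icc_succ_top (show 1 ≤ m+1+1 by omega), ← ih]
    ring

lemma sumIdm1 : ∀ n : ℕ, ∑ j ∈ Finset.Icc 1 (2*n+1), (j-1) = 2*n^2 + n := by
  intro n
  induction n with
  | zero => simp
  | succ n ih =>
    rw [show 2*(n+1)+1 = (2*n+2)+1 by ring, Finset.sum_Icc_succ_top (by omega),
      show (2*n+2) = (2*n+1)+1 by ring, Finset.sum_Icc_succ_top (by omega), ih]
    ring_nf
    omega

end counting
section invtotal

lemma rev_inv (n : ℕ) (π : Equiv.Perm (Fin (2*n+1))) :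
    invStat (reverseP π)
      = (((Finset.Icc 1 (2*n+1)) ×ˢ (Finset.Icc 1 (2*n+1))).filter fun p =>
          p.1 < p.2 ∧ pval π p.1 < pval π p.2).card := by
  classical
  unfold invStat
  apply Finset.card_nbij' (i := fun p => ((2*n+1)+1-p.2, (2*n+1)+1-p.1)) (j := fun p => ((2*n+1)+1-p.2, (2*n+1)+1-p.1))
  · rintro ⟨a, b⟩ hab
    change (a, b) ∈ (_ : Finset (ℕ × ℕ)) at hab
    change _ ∈ (_ : Finset (ℕ × ℕ))
    simp only [Finset.mem_filter, Finset.mem_product, Finset.mem_Icc] at hab ⊢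
    obtain ⟨⟨⟨ha1, ha2⟩, hb1, hb2⟩, hlt, hv⟩ := hab
    rw [pval_reverse π hb1 hb2, pval_reverse π ha1 ha2] at hv
    exact ⟨⟨⟨by omega, by omega⟩, by omega, by omega⟩, by omega, hv⟩
  · rintro ⟨a, b⟩ hab
    change (a, b) ∈ (_ : Finset (ℕ × ℕ)) at hab
    change _ ∈ (_ : Finset (ℕ × ℕ))
    simp only [Finset.mem_filter, Finset.mem_product, Finset.mem_Icc] at hab ⊢
    obtain ⟨⟨⟨ha1, ha2⟩, hb1, hb2⟩, hlt, hv⟩ := hab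
    refine ⟨⟨⟨by omega, by omega⟩, by omega, by omega⟩, by omega, ?_⟩
    rw [pval_reverse (i := (2*n+1)+1-a) π (by omega) (by omega),
      pval_reverse (i := (2*n+1)+1-b) π (by omega) (by omega),
      show (2*n+1)+1-((2*n+1)+1-a) = a by omega, show (2*n+1)+1-((2*n+1)+1-b) = b by omega]
    exact hv
  · rintro ⟨a, b⟩ hab
    change (a, b) ∈ (_ : Finset (ℕ × ℕ)) at hab
    simp only [Finset.mem_filter, Finset.mem_product, Finset.mem_Icc] at hab
    simp only [Prod.mk.injEq]
    omega
  · rintro ⟨a, b⟩ hab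
    change (a, b) ∈ (_ : Finset (ℕ × ℕ)) at hab
    simp only [Finset.mem_filter, Finset.mem_product, Finset.mem_Icc] at hab
    simp only [Prod.mk.injEq]
    omega

lemma inv_add_rev (n : ℕ) (π : Equiv.Perm (Fin (2*n+1))) :
    invStat π + invStat (reverseP π) = 2 * n ^ 2 + n := by
  classical
  have hA := rev_inv n π
  have hB := Finset.card_filter_add_card_filter_not
      (s := ((Finset.Icc 1 (2*n+1)) ×ˢ (Finset.Icc 1 (2*n+1))).filter fun p => p.1 < p.2)
      (p := fun p => pval π p.2 < pval π p.1)
  rw [Finset.filter_filter, Finset.filter_filter] at hB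
  have e1 : (((Finset.Icc 1 (2*n+1)) ×ˢ (Finset.Icc 1 (2*n+1))).filter
      fun p => p.1 < p.2 ∧ pval π p.2 < pval π p.1).card = invStat π := by
    unfold invStat
    congr 1
  have e2 : (((Finset.Icc 1 (2*n+1)) ×ˢ (Finset.Icc 1 (2*n+1))).filter
      fun p => p.1 < p.2 ∧ ¬ (pval π p.2 < pval π p.1)).card
      = (((Finset.Icc 1 (2*n+1)) ×ˢ (Finset.Icc 1 (2*n+1))).filter
      fun p => p.1 < p.2 ∧ pval π p.1 < pval π p.2).card := by
    congr 1
    apply Finset.ext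
    rintro ⟨a, b⟩
    simp only [Finset.mem_filter, Finset.mem_product, Finset.mem_Icc]
    constructor
    · rintro ⟨⟨⟨ha1, ha2⟩, hb1, hb2⟩, hlt, hv⟩
      have := pval_ne π ha1 ha2 hb1 hb2 (by omega)
      exact ⟨⟨⟨ha1, ha2⟩, hb1, hb2⟩, hlt, by omega⟩
    · rintro ⟨⟨⟨ha1, ha2⟩, hb1, hb2⟩, hlt, hv⟩
      exact ⟨⟨⟨ha1, ha2⟩, hb1, hb2⟩, hlt, by omega⟩
  have hC : (((Finset.Icc 1 (2*n+1)) ×ˢ (Finset.Icc 1 (2*n+1))).filter fun p => p.1 < p.2).card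
      = 2*n^2+n := by
    rw [card_filter_prod_snd (Finset.Icc 1 (2*n+1)) (Finset.Icc 1 (2*n+1)) (fun i j => i < j)]
    rw [Finset.sum_congr rfl (fun j hj => ?_)]
    · exact sumIdm1 n
    · rw [Finset.mem_Icc] at hj
      have e : (Finset.Icc 1 (2*n+1)).filter (fun i => i < j) = Finset.Icc 1 (j-1) := by
        apply Finset.ext
        intro x
        simp only [Finset.mem_filter, Finset.mem_Icc]
        omega
      rw [e, Nat.card_Icc]
      omega
  omega

end invtotal
section s3

lemma inv_eq_two_v312 (n : ℕ) (π : Equiv.Perm (Fin (2*n+1))) (hdu : isDownUp π)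
    (hav : avoids π ![2,1,3]) : invStat π = 2 * v3_12 π := by
  classical
  have hset : ∀ k, 1 ≤ k → k ≤ n →
      ((Finset.Icc 1 (2*n+1)).filter fun i => i < 2*k ∧ pval π (2*k) < pval π i)
        = ((Finset.Icc 1 (2*n+1)).filter fun i => i < 2*k+1 ∧ pval π (2*k+1) < pval π i) := by
    intro k hk1 hk2
    have hasc : pval π (2*k) < pval π (2*k+1) :=
      (hdu (2*k) (by omega) (by omega)).2 ⟨k, by ring⟩
    apply Finset.ext
    intro i
    simp only [Finset.mem_filter, Finset.mem_Icc]
    constructor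
    · rintro ⟨⟨hi1, hi2⟩, hlt, hv⟩
      refine ⟨⟨hi1, hi2⟩, by omega, ?_⟩
      have hne : pval π i ≠ pval π (2*k+1) := pval_ne π hi1 hi2 (by omega) (by omega) (by omega)
      by_contra hc
      exact no213 (a := i) (b := 2*k) (c := 2*k+1) π hav hi1 hlt (by omega) (by omega) hv (by omega)
    · rintro ⟨⟨hi1, hi2⟩, hlt, hv⟩
      have hne : i ≠ 2*k := by
        intro he
        rw [he] at hv
        omega
      refine ⟨⟨hi1, hi2⟩, ?_, ?_⟩ <;> omega
  have hinv : invStat π = ∑ j ∈ Finset.Icc 1 (2*n+1),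
      ((Finset.Icc 1 (2*n+1)).filter fun i => i < j ∧ pval π j < pval π i).card := by
    unfold invStat
    exact card_filter_prod_snd (Finset.Icc 1 (2*n+1)) (Finset.Icc 1 (2*n+1))
      (fun i j => i < j ∧ pval π j < pval π i)
  have hL1 : ((Finset.Icc 1 (2*n+1)).filter fun i => i < 1 ∧ pval π 1 < pval π i).card = 0 := by
    rw [Finset.card_eq_zero, Finset.filter_eq_empty_iff]
    intro x hx
    rw [Finset.mem_Icc] at hx
    rintro ⟨h1, -⟩
    omega
  have hv312 : v3_12 π = ∑ j ∈ Finset.Icc 1 (2*n),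
      ((Finset.Icc 1 (2*n)).filter fun i =>
        i < j ∧ pval π j < pval π (j+1) ∧ pval π (j+1) < pval π i).card := by
    unfold v3_12
    rw [show (2*n+1)-1 = 2*n by omega]
    exact card_filter_prod_snd (Finset.Icc 1 (2*n)) (Finset.Icc 1 (2*n))
      (fun i j => i < j ∧ pval π j < pval π (j+1) ∧ pval π (j+1) < pval π i)
  have hg0 : ∀ k, 1 ≤ k → k ≤ n →
      ((Finset.Icc 1 (2*n)).filter fun i =>
        i < 2*k-1 ∧ pval π (2*k-1) < pval π (2*k-1+1) ∧ pval π (2*k-1+1) < pval π i).card = 0 := by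
    intro k hk1 hk2
    rw [Finset.card_eq_zero, Finset.filter_eq_empty_iff]
    intro x hx
    rintro ⟨-, hasc', -⟩
    have hdesc := (hdu (2*k-1) (by omega) (by omega)).1 ⟨k-1, by omega⟩
    rw [show 2*k-1+1 = 2*k by omega] at hasc' hdesc
    omega
  have hg : ∀ k, 1 ≤ k → k ≤ n →
      ((Finset.Icc 1 (2*n)).filter fun i =>
        i < 2*k ∧ pval π (2*k) < pval π (2*k+1) ∧ pval π (2*k+1) < pval π i)
      = ((Finset.Icc 1 (2*n+1)).filter fun i => i < 2*k+1 ∧ pval π (2*k+1) < pval π i) := by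
    intro k hk1 hk2
    have hasc : pval π (2*k) < pval π (2*k+1) :=
      (hdu (2*k) (by omega) (by omega)).2 ⟨k, by ring⟩
    apply Finset.ext
    intro i
    simp only [Finset.mem_filter, Finset.mem_Icc]
    constructor
    · rintro ⟨⟨h1, h2⟩, hlt, -, hvv⟩
      exact ⟨⟨h1, by omega⟩, by omega, hvv⟩
    · rintro ⟨⟨h1, h2⟩, hlt, hvv⟩
      have hne : i ≠ 2*k := by
        intro he
        rw [he] at hvv
        omega
      exact ⟨⟨h1, by omega⟩, by omega, hasc, hvv⟩
  have step1 : ∑ k ∈ Finset.Icc 1 n,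
      (((Finset.Icc 1 (2*n+1)).filter fun i => i < 2*k ∧ pval π (2*k) < pval π i).card
        + ((Finset.Icc 1 (2*n+1)).filter fun i => i < 2*k+1 ∧ pval π (2*k+1) < pval π i).card)
      = ∑ k ∈ Finset.Icc 1 n,
        2 * ((Finset.Icc 1 (2*n+1)).filter fun i => i < 2*k+1 ∧ pval π (2*k+1) < pval π i).card := by
    refine Finset.sum_congr rfl fun k hk => ?_
    rw [Finset.mem_Icc] at hk
    rw [hset k hk.1 hk.2]
    ring
  have step2 : ∑ k ∈ Finset.Icc 1 n,
      (((Finset.Icc 1 (2*n)).filter fun i =>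
          i < 2*k-1 ∧ pval π (2*k-1) < pval π (2*k-1+1) ∧ pval π (2*k-1+1) < pval π i).card
        + ((Finset.Icc 1 (2*n)).filter fun i =>
          i < 2*k ∧ pval π (2*k) < pval π (2*k+1) ∧ pval π (2*k+1) < pval π i).card)
      = ∑ k ∈ Finset.Icc 1 n,
        ((Finset.Icc 1 (2*n+1)).filter fun i => i < 2*k+1 ∧ pval π (2*k+1) < pval π i).card := by
    refine Finset.sum_congr rfl fun k hk => ?_
    rw [Finset.mem_Icc] at hk
    rw [hg0 k hk.1 hk.2, hg k hk.1 hk.2]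
    omega
  rw [hinv, splitA, hL1, hv312, splitB, step1, step2, Finset.mul_sum]
  omega

end s3
section s4

lemma rev_inv_eq_v31_2 (n : ℕ) (π : Equiv.Perm (Fin (2*n+1))) (hdu : isDownUp π)
    (hav : avoids π ![2,1,3]) : invStat (reverseP π) = v31_2 π := by
  classical
  have hRodd : ∀ p, 1 ≤ p → p ≤ 2*n+1 → p % 2 = 1 →
      ((Finset.Icc 1 (2*n+1)).filter fun j => p < j ∧ pval π p < pval π j).card = 0 := by
    intro p hp1 hp2 hpo
    rw [Finset.card_eq_zero, Finset.filter_eq_empty_iff]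
    intro j hj
    rw [Finset.mem_Icc] at hj
    rintro ⟨hpj, hv⟩
    rcases Nat.lt_or_ge p (2*n+1) with hpN | hpN
    · have hpN' : p + 1 ≤ 2*n+1 := by omega
      have hdesc := (hdu p hp1 hpN').1 ⟨(p-1)/2, by omega⟩
      have := after_descent π hav hp1 hpN' hdesc j hpj hj.2
      omega
    · omega
  have hteq : ∀ p, 1 ≤ p → p ≤ 2*n+1 → p % 2 = 1 →
      ((Finset.Icc 1 (2*n+1)).filter fun j =>
        p+1 < j ∧ pval π (p+1) < pval π j ∧ pval π j < pval π p)
      = ((Finset.Icc 1 (2*n+1)).filter fun j => p+1 < j ∧ pval π (p+1) < pval π j) := by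
    intro p hp1 hp2 hpo
    apply Finset.ext
    intro j
    simp only [Finset.mem_filter, Finset.mem_Icc]
    constructor
    · rintro ⟨hm, h1, h2, -⟩
      exact ⟨hm, h1, h2⟩
    · rintro ⟨hm, h1, h2⟩
      rcases Nat.lt_or_ge p (2*n+1) with hpN | hpN
      · have hpN' : p + 1 ≤ 2*n+1 := by omega
        have hdesc := (hdu p hp1 hpN').1 ⟨(p-1)/2, by omega⟩
        have := after_descent π hav hp1 hpN' hdesc j (by omega) hm.2
        exact ⟨hm, h1, h2, this⟩
      · exact absurd hm.2 (by omega)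
  have hteven : ∀ k, 1 ≤ k → k ≤ n →
      ((Finset.Icc 1 (2*n+1)).filter fun j =>
        2*k+1 < j ∧ pval π (2*k+1) < pval π j ∧ pval π j < pval π (2*k)).card = 0 := by
    intro k hk1 hk2
    rw [Finset.card_eq_zero, Finset.filter_eq_empty_iff]
    intro j hj
    rintro ⟨h1, h2, h3⟩
    have hasc : pval π (2*k) < pval π (2*k+1) :=
      (hdu (2*k) (by omega) (by omega)).2 ⟨k, by ring⟩
    omega
  have hnon : invStat (reverseP π) = ∑ a ∈ Finset.Icc 1 (2*n+1),
      ((Finset.Icc 1 (2*n+1)).filter fun j => a < j ∧ pval π a < pval π j).card := by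
    rw [rev_inv n π]
    exact card_filter_prod_fst (Finset.Icc 1 (2*n+1)) (Finset.Icc 1 (2*n+1))
      (fun i j => i < j ∧ pval π i < pval π j)
  have hv31 : v31_2 π = ∑ a ∈ Finset.Icc 1 (2*n+1),
      ((Finset.Icc 1 (2*n+1)).filter fun j =>
        a+1 < j ∧ pval π (a+1) < pval π j ∧ pval π j < pval π a).card := by
    unfold v31_2
    exact card_filter_prod_fst (Finset.Icc 1 (2*n+1)) (Finset.Icc 1 (2*n+1))
      (fun i j => i+1 < j ∧ pval π (i+1) < pval π j ∧ pval π j < pval π i)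
  rw [hnon, hv31, splitA, splitA]
  have hR1 : ((Finset.Icc 1 (2*n+1)).filter fun j => 1 < j ∧ pval π 1 < pval π j).card = 0 :=
    hRodd 1 (by omega) (by omega) (by omega)
  have e1 : ∑ k ∈ Finset.Icc 1 n,
      (((Finset.Icc 1 (2*n+1)).filter fun j => 2*k < j ∧ pval π (2*k) < pval π j).card
        + ((Finset.Icc 1 (2*n+1)).filter fun j => 2*k+1 < j ∧ pval π (2*k+1) < pval π j).card)
      = ∑ k ∈ Finset.Icc 1 n,
        ((Finset.Icc 1 (2*n+1)).filter fun j => 2*k < j ∧ pval π (2*k) < pval π j).card := by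
    refine Finset.sum_congr rfl fun k hk => ?_
    rw [Finset.mem_Icc] at hk
    rw [hRodd (2*k+1) (by omega) (by omega) (by omega)]
    omega
  have e3 : ((Finset.Icc 1 (2*n+1)).filter fun j =>
        1+1 < j ∧ pval π (1+1) < pval π j ∧ pval π j < pval π 1).card
      = ((Finset.Icc 1 (2*n+1)).filter fun j => 2 < j ∧ pval π 2 < pval π j).card := by
    rw [hteq 1 (by omega) (by omega) (by omega)]
  have e2 : ∑ k ∈ Finset.Icc 1 n,
      (((Finset.Icc 1 (2*n+1)).filter fun j =>
          2*k+1 < j ∧ pval π (2*k+1) < pval π j ∧ pval π j < pval π (2*k)).card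
        + ((Finset.Icc 1 (2*n+1)).filter fun j =>
          2*k+1+1 < j ∧ pval π (2*k+1+1) < pval π j ∧ pval π j < pval π (2*k+1)).card)
      = ∑ k ∈ Finset.Icc 1 n,
        ((Finset.Icc 1 (2*n+1)).filter fun j =>
          2*(k+1) < j ∧ pval π (2*(k+1)) < pval π j).card := by
    refine Finset.sum_congr rfl fun k hk => ?_
    rw [Finset.mem_Icc] at hk
    rw [hteven k hk.1 hk.2, hteq (2*k+1) (by omega) (by omega) (by omega),
      show 2*k+1+1 = 2*(k+1) by ring]
    omega
  rw [hR1, e1, e3, e2]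
  have hlast : ((Finset.Icc 1 (2*n+1)).filter fun j =>
      2*(n+1) < j ∧ pval π (2*(n+1)) < pval π j).card = 0 := by
    rw [Finset.card_eq_zero, Finset.filter_eq_empty_iff]
    intro j hj
    rw [Finset.mem_Icc] at hj
    rintro ⟨h1, -⟩
    omega
  have hsh := shiftSum
    (fun k => ((Finset.Icc 1 (2*n+1)).filter fun j => 2*k < j ∧ pval π (2*k) < pval π j).card) n
  rw [Finset.sum_Icc_succ_top (show 1 ≤ n+1 by omega), hlast] at hsh
  rw [show (2:ℕ)*1 = 2 from rfl] at hsh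
  omega

end s4
/-- inversions of odd down-up permutations are admissible, and
properties of adi on T_{2n+1,n}(213). -/
theorem stmt9 (n : ℕ) :
    (∀ π : Equiv.Perm (Fin (2 * n + 1)), isDownUp π → adiStat π = invStat π) ∧
    (∀ π : Equiv.Perm (Fin (2 * n + 1)),
      avoids π ![2,1,3] → noDD 0 π → desStat π = n →
        adiStat π + adiStat (reverseP π) = 2 * n ^ 2 + n ∧
        adiStat π = 2 * v3_12 π ∧
        adiStat (reverseP π) = v31_2 π) := by
  constructor
  · intro π hdu
    exact adi_eq_inv n π hdu
  · intro π hav hnd hdes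
    have hdu := downUp_of_noDD n π hnd hdes
    have hdur := downUp_reverse n π hdu
    refine ⟨?_, ?_, ?_⟩
    · rw [adi_eq_inv n π hdu, adi_eq_inv n _ hdur]
      exact inv_add_rev n π
    · rw [adi_eq_inv n π hdu]
      exact inv_eq_two_v312 n π hdu hav
    · rw [adi_eq_inv n _ hdur]
      exact rev_inv_eq_v31_2 n π hdu hav
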